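/- Let Γ be a finite accessible ρ_s-closed subgraph of Cay(X*, X ∪ X̄*) with at least one edge, and let u and uv be distinct vertices of Γ (v ∈ X*, v ≠ λ). Then Γ contains the edge (u, v̄, uv). -/
import Mathlib


/-- A (pre)subgraph of the Cayley graph `Cay(S,X)`: a set of vertices (elements
of `S`) and a set of edges; the edge `(s, x)` has source `s`, label `x` and
target `s * ι x`. -/
structure PreGraph (S X : Type*) where
  verts : Set S
  edges : Set (S × X)

/-- One step along an edge of `G`. -/
def PreGraph.step {S X : Type*} [Mul S] (ι : X → S) (G : PreGraph S X)
    (a b : S) : Prop :=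
  ∃ x, (a, x) ∈ G.edges ∧ b = a * ι x

/-- `G` is a finite accessible subgraph of `Cay(S,X)`: it is finite, the
endpoints of every edge are vertices, `1 ∈ V(G)` and every vertex is reachable
from `1` by a directed path. -/
def IsAccessible {S X : Type*} [Monoid S] (ι : X → S) (G : PreGraph S X) : Prop :=
  G.verts.Finite ∧ G.edges.Finite ∧
  (∀ e ∈ G.edges, e.1 ∈ G.verts ∧ e.1 * ι e.2 ∈ G.verts) ∧
  (1 : S) ∈ G.verts ∧
  ∀ v ∈ G.verts, Relation.ReflTransGen (PreGraph.step ι G) 1 v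

/-- The label alphabet `X ∪ X̄*`, where `Sum.inl x` is the letter `x ∈ X` and
`Sum.inr u` is the extra generator `ū` for `u ∈ X*`. -/
abbrev LabelT (X : Type*) := X ⊕ FreeMonoid X

/-- The generating map `X ∪ X̄* → X*`: `x ↦ x`, `ū ↦ u`. -/
def iotaL (X : Type*) : LabelT X → FreeMonoid X := Sum.elim FreeMonoid.of id

/-- An edge set `D` is `ρ_s`-closed, i.e. closed under the transformations
(T1)–(T4):
(T1) an edge `(v, ū, vu)` forces the loop `(v, λ̄, v)`;
(T2) an edge `(v, x, vx)` forces the edge `(v, x̄, vx)`;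
(T3) edges `(w, ū, wu)` and `(wu, v̄, wuv)` force the edge `(w, uv‾, wuv)`;
(T4) edges `(w, ū, wu)` and `(w, uv‾, wuv)` force the edge `(wu, v̄, wuv)`. -/
def ClosedES {X : Type*} (D : Set (FreeMonoid X × LabelT X)) : Prop :=
  (∀ (v : FreeMonoid X) (u : FreeMonoid X),
    (v, (Sum.inr u : LabelT X)) ∈ D → (v, (Sum.inr 1 : LabelT X)) ∈ D) ∧
  (∀ (v : FreeMonoid X) (x : X),
    (v, (Sum.inl x : LabelT X)) ∈ D → (v, (Sum.inr (FreeMonoid.of x) : LabelT X)) ∈ D) ∧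
  (∀ (w u v' : FreeMonoid X),
    (w, (Sum.inr u : LabelT X)) ∈ D → (w * u, (Sum.inr v' : LabelT X)) ∈ D →
      (w, (Sum.inr (u * v') : LabelT X)) ∈ D) ∧
  (∀ (w u v' : FreeMonoid X),
    (w, (Sum.inr u : LabelT X)) ∈ D → (w, (Sum.inr (u * v') : LabelT X)) ∈ D →
      (w * u, (Sum.inr v' : LabelT X)) ∈ D)

/-- if `Γ` is a finite accessible `ρ_s`-closed subgraph of
`Cay(X*, X ∪ X̄*)` with at least one edge and `u`, `uv` are distinct vertices of
`Γ` (with `v ∈ X*`, `v ≠ λ`), then `Γ` contains the edge `(u, v̄, uv)`. -/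
theorem stmt_17 (X : Type*) (Γ : PreGraph (FreeMonoid X) (LabelT X))
    (hacc : IsAccessible (iotaL X) Γ)
    (hclosed : ClosedES Γ.edges)
    (hedge : Γ.edges.Nonempty)
    (u v : FreeMonoid X) (hu : u ∈ Γ.verts) (huv : u * v ∈ Γ.verts)
    (hv : v ≠ 1) :
    (u, (Sum.inr v : LabelT X)) ∈ Γ.edges := by
  obtain ⟨hVfin, hEfin, hends, h1, hreach⟩ := hacc
  obtain ⟨hT1, hT2, hT3, hT4⟩ := hclosed
  -- any edge at a vertex gives the empty loop there
  have hloopat : ∀ (a : FreeMonoid X) (y : LabelT X), (a, y) ∈ Γ.edges →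
      (a, (Sum.inr 1 : LabelT X)) ∈ Γ.edges := by
    rintro a (x | w) h
    · exact hT1 a _ (hT2 a x h)
    · exact hT1 a w h
  -- loop at the identity
  have hloop : ((1 : FreeMonoid X), (Sum.inr 1 : LabelT X)) ∈ Γ.edges := by
    obtain ⟨⟨s, y⟩, hsy⟩ := hedge
    have hs : s ∈ Γ.verts := (hends _ hsy).1
    rcases (hreach s hs).cases_head with h | ⟨c, ⟨x, hx, -⟩, -⟩
    · subst h; exact hloopat 1 y hsy
    · exact hloopat 1 x hx
  -- every vertex w has the edge (1, w̄, w)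
  have claimA : ∀ w : FreeMonoid X,
      Relation.ReflTransGen (PreGraph.step (iotaL X) Γ) 1 w →
      ((1 : FreeMonoid X), (Sum.inr w : LabelT X)) ∈ Γ.edges := by
    intro w h
    induction h with
    | refl => exact hloop
    | tail _ hstep ih =>
      obtain ⟨x, hx, rfl⟩ := hstep
      rename_i b _
      cases x with
      | inl y =>
        have h2 := hT2 b y hx
        have h3 := hT3 1 b (FreeMonoid.of y) ih (by rwa [one_mul])
        simpa [iotaL] using h3
      | inr u' =>
        have h3 := hT3 1 b u' ih (by rwa [one_mul])
        simpa [iotaL] using h3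
  have h4 := hT4 1 u v (claimA u (hreach u hu)) (claimA (u * v) (hreach _ huv))
  rwa [one_mul] at h4
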